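/- Let U be a unitary four-site gate, L even, t ≥ 1, a : Matrix (Fin d) (Fin d) ℂ and y a lattice site. Then the Heisenberg-evolved operator 𝕌^{−t} * a_y * 𝕌^t is supported on the light-cone base LC: there exists a matrix b indexed by the functions LC → Fin d such that for all global indices f, g, (𝕌^{−t} * a_y * 𝕌^t)[f,g] = b[f restricted to LC, g restricted to LC] if f and g agree on the complement of LC, and (𝕌^{−t} * a_y * 𝕌^t)[f,g] = 0 otherwise. -/

import Mathlib

open Matrix

/-- A matrix is unitary if it is inverted by its conjugate transpose on both sides. -/
def IsUnitary {n : Type*} [Fintype n] [DecidableEq n] (M : Matrix n n ℂ) : Prop :=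
  M * Mᴴ = 1 ∧ Mᴴ * M = 1

/-- Index type of a four-site gate, legs ordered by the plaquette sites
`(0,0), (1,0), (0,1), (1,1)`. -/
abbrev FourIdx (d : ℕ) := Fin d × Fin d × Fin d × Fin d

/-- Lattice sites of the `L × L` torus. -/
abbrev Site (L : ℕ) := ZMod L × ZMod L

/-- Index type of global operators: one `Fin d` leg per lattice site. -/
abbrev GlobalIdx (d L : ℕ) := Site L → Fin d

/-- The global operator `U_{p(x)}`, acting as the four-site gate `U` on the legs at the
plaquette sites `x, x+(1,0), x+(0,1), x+(1,1)` (in this order) and as the identity elsewhere. -/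
noncomputable def plaqOp {d L : ℕ} [NeZero L] (U : Matrix (FourIdx d) (FourIdx d) ℂ)
    (x : Site L) : Matrix (GlobalIdx d L) (GlobalIdx d L) ℂ :=
  Matrix.of fun f g =>
    if ∀ u : Site L, u ≠ x → u ≠ x + (1, 0) → u ≠ x + (0, 1) → u ≠ x + (1, 1) → f u = g u then
      U (f x, f (x + (1, 0)), f (x + (0, 1)), f (x + (1, 1)))
        (g x, g (x + (1, 0)), g (x + (0, 1)), g (x + (1, 1)))
    else 0

/-- The even layer `𝕌_ee`: product of the mutually commuting gates `U_{p(2i,2j)}`. -/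
noncomputable def Uee (d L : ℕ) [NeZero L] (U : Matrix (FourIdx d) (FourIdx d) ℂ) :
    Matrix (GlobalIdx d L) (GlobalIdx d L) ℂ :=
  (((List.range (L / 2)).flatMap fun i => (List.range (L / 2)).map fun j =>
      plaqOp U (((2 * i : ℕ) : ZMod L), ((2 * j : ℕ) : ZMod L)))).prod

/-- The odd layer `𝕌_oo`: product of the mutually commuting gates `U_{p(2i+1,2j+1)}`. -/
noncomputable def Uoo (d L : ℕ) [NeZero L] (U : Matrix (FourIdx d) (FourIdx d) ℂ) :
    Matrix (GlobalIdx d L) (GlobalIdx d L) ℂ :=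
  (((List.range (L / 2)).flatMap fun i => (List.range (L / 2)).map fun j =>
      plaqOp U (((2 * i + 1 : ℕ) : ZMod L), ((2 * j + 1 : ℕ) : ZMod L)))).prod

/-- One discrete time step `𝕌 = 𝕌_oo ⬝ 𝕌_ee`. -/
noncomputable def Ustep (d L : ℕ) [NeZero L] (U : Matrix (FourIdx d) (FourIdx d) ℂ) :
    Matrix (GlobalIdx d L) (GlobalIdx d L) ℂ :=
  Uoo d L U * Uee d L U

/-- The global operator acting as the `d × d` matrix `a` on leg `x` and as the identity
elsewhere. -/
noncomputable def siteOpG {d L : ℕ} [NeZero L] (a : Matrix (Fin d) (Fin d) ℂ) (x : Site L) :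
    Matrix (GlobalIdx d L) (GlobalIdx d L) ℂ :=
  Matrix.of fun f g =>
    (if ∀ u : Site L, u ≠ x → f u = g u then 1 else 0) * a (f x) (g x)

/-- Circular distance in `ZMod L`. -/
def cdist {L : ℕ} [NeZero L] (a b : ZMod L) : ℕ := min (a - b).val (b - a).val

/-- Torus ℓ∞-distance of two lattice sites. -/
def torusDist {L : ℕ} [NeZero L] (u v : Site L) : ℕ :=
  max (cdist u.1 v.1) (cdist u.2 v.2)

/-- The anchor site `m` of the plaquette containing `y`: with `ŷ ∈ {0,…,L−1}²` the
representative of `y`, `m_k = ŷ_k` if `ŷ_k` is odd and `m_k = ŷ_k − 1` if `ŷ_k` is even. -/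
def msite {L : ℕ} [NeZero L] (y : Site L) : Site L :=
  ((if Odd y.1.val then y.1 else y.1 - 1), (if Odd y.2.val then y.2 else y.2 - 1))

/-- The base of the light cone of `y` for time `t`: all sites within torus ℓ∞-distance
`2t − 1` of some site of the plaquette anchored at `msite y`. -/
def LCfin {L : ℕ} [NeZero L] (y : Site L) (t : ℕ) : Finset (Site L) :=
  Finset.univ.filter fun z =>
    ∃ w ∈ ({msite y, msite y + (1, 0), msite y + (0, 1), msite y + (1, 1)} : Finset (Site L)),
      torusDist w z ≤ 2 * t - 1


set_option linter.unusedSectionVars false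

open Matrix

section SuppTheory

variable {d L : ℕ} [NeZero L]

/-- agreement off a finset -/
def Agr (S : Finset (Site L)) (f g : GlobalIdx d L) : Prop :=
  ∀ z : Site L, z ∉ S → f z = g z

instance Agr.dec (S : Finset (Site L)) (f g : GlobalIdx d L) : Decidable (Agr S f g) :=
  decidable_of_iff (∀ z : Site L, z ∉ S → f z = g z) Iff.rfl

lemma Agr.symm {S : Finset (Site L)} {f g : GlobalIdx d L} (h : Agr S f g) : Agr S g f :=
  fun z hz => (h z hz).symm

lemma Agr.trans {S : Finset (Site L)} {f g h : GlobalIdx d L} (h1 : Agr S f g)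
    (h2 : Agr S g h) : Agr S f h := fun z hz => (h1 z hz).trans (h2 z hz)

/-- patch: keep values on S, default elsewhere -/
def patch (e : Fin d) (S : Finset (Site L)) (f : GlobalIdx d L) : GlobalIdx d L :=
  fun z => if z ∈ S then f z else e

lemma agr_patch_patch (e : Fin d) (S : Finset (Site L)) (f g : GlobalIdx d L) :
    Agr S (patch e S f) (patch e S g) := by
  intro z hz; simp [patch, hz]

lemma patch_patch (e : Fin d) (S : Finset (Site L)) (f : GlobalIdx d L) :
    patch e S (patch e S f) = patch e S f := by
  funext z; by_cases hz : z ∈ S <;> simp [patch, hz]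

/-- Supportedness of a global operator on a finset of sites. -/
def Supp (e : Fin d) (S : Finset (Site L)) (M : Matrix (GlobalIdx d L) (GlobalIdx d L) ℂ) :
    Prop :=
  ∀ f g, (Agr S f g → M f g = M (patch e S f) (patch e S g)) ∧ (¬ Agr S f g → M f g = 0)

lemma Supp.eq_patch {e : Fin d} {S : Finset (Site L)} {M} (h : Supp e S M)
    {f g : GlobalIdx d L} (hA : Agr S f g) :
    M f g = M (patch e S f) (patch e S g) := (h f g).1 hA

lemma Supp.eq_zero {e : Fin d} {S : Finset (Site L)} {M} (h : Supp e S M)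
    {f g : GlobalIdx d L} (hA : ¬ Agr S f g) : M f g = 0 := (h f g).2 hA

lemma supp_mono {e : Fin d} {S T : Finset (Site L)} {M} (hST : S ⊆ T) (hM : Supp e S M) :
    Supp e T M := by
  intro f g
  constructor
  · intro hA
    have hiff : Agr S f g ↔ Agr S (patch e T f) (patch e T g) := by
      constructor
      · intro h z hz
        by_cases hzT : z ∈ T
        · simpa [patch, hzT] using h z hz
        · simp [patch, hzT]
      · intro h z hz
        have := h z hz
        by_cases hzT : z ∈ T
        · simpa [patch, hzT] using this
        · exact hA z hzT
    have hps : ∀ f : GlobalIdx d L, patch e S (patch e T f) = patch e S f := by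
      intro f; funext z
      by_cases hz : z ∈ S
      · simp [patch, hz, hST hz]
      · simp [patch, hz]
    by_cases hAS : Agr S f g
    · rw [hM.eq_patch hAS, hM.eq_patch (hiff.1 hAS), hps, hps]
    · rw [hM.eq_zero hAS, hM.eq_zero (fun h => hAS (hiff.2 h))]
  · intro hA
    apply hM.eq_zero
    intro h
    exact hA (fun z hz => h z (fun hzS => hz (hST hzS)))

lemma supp_conjT {e : Fin d} {S : Finset (Site L)} {M} (hM : Supp e S M) : Supp e S Mᴴ := by
  intro f g
  constructor
  · intro hA
    simp only [Matrix.conjTranspose_apply]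
    rw [hM.eq_patch hA.symm]
  · intro hA
    simp only [Matrix.conjTranspose_apply]
    rw [hM.eq_zero (fun h => hA h.symm)]
    simp

lemma supp_one (e : Fin d) (S : Finset (Site L)) :
    Supp e S (1 : Matrix (GlobalIdx d L) (GlobalIdx d L) ℂ) := by
  intro f g
  constructor
  · intro hA
    by_cases hfg : f = g
    · subst hfg; simp
    · have hpfg : patch e S f ≠ patch e S g := by
        intro h
        apply hfg
        funext z
        by_cases hz : z ∈ S
        · have := congrFun h z; simpa [patch, hz] using this
        · exact hA z hz
      simp [Matrix.one_apply, hfg, hpfg]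
  · intro hA
    have hfg : f ≠ g := by rintro rfl; exact hA (fun z _ => rfl)
    simp [Matrix.one_apply, hfg]

/-- merge: values of h on S, values of f off S -/
private def mrg (S : Finset (Site L)) (f h : GlobalIdx d L) : GlobalIdx d L :=
  fun z => if z ∈ S then h z else f z

lemma supp_mul {e : Fin d} {S : Finset (Site L)} {M N} (hM : Supp e S M) (hN : Supp e S N) :
    Supp e S (M * N) := by
  classical
  intro f g
  constructor
  · intro hA
    simp only [Matrix.mul_apply]
    have hL1 : ∑ h, M f h * N h g
        = ∑ h ∈ Finset.univ.filter (fun h => Agr S f h), M f h * N h g := by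
      refine (Finset.sum_filter_of_ne ?_).symm
      intro h _ hne
      by_contra hAf
      exact hne (by rw [hM.eq_zero hAf, zero_mul])
    have hL2 : ∑ h, M (patch e S f) h * N h (patch e S g)
        = ∑ h ∈ Finset.univ.filter (fun h => Agr S (patch e S f) h),
            M (patch e S f) h * N h (patch e S g) := by
      refine (Finset.sum_filter_of_ne ?_).symm
      intro h _ hne
      by_contra hAf
      exact hne (by rw [hM.eq_zero hAf, zero_mul])
    rw [hL1, hL2]
    refine Finset.sum_nbij' (fun h => patch e S h) (fun h => mrg S f h) ?_ ?_ ?_ ?_ ?_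
    · intro h hh
      simp only [Finset.mem_filter, Finset.mem_univ, true_and] at hh ⊢
      intro z hz; simp [patch, hz]
    · intro h hh
      simp only [Finset.mem_filter, Finset.mem_univ, true_and] at hh ⊢
      intro z hz; simp [mrg, hz]
    · intro h hh
      simp only [Finset.mem_filter, Finset.mem_univ, true_and] at hh
      funext z
      by_cases hz : z ∈ S
      · simp [mrg, patch, hz]
      · simp [mrg, patch, hz, hh z hz]
    · intro h hh
      simp only [Finset.mem_filter, Finset.mem_univ, true_and] at hh
      funext z
      by_cases hz : z ∈ S
      · simp [mrg, patch, hz]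
      · simp [mrg, patch, hz, (hh z hz).symm]
    · intro h hh
      simp only [Finset.mem_filter, Finset.mem_univ, true_and] at hh
      have hAg : Agr S h g := (hh.symm.trans hA : Agr S h g)
      rw [hM.eq_patch hh, hN.eq_patch hAg]
  · intro hA
    simp only [Matrix.mul_apply]
    refine Finset.sum_eq_zero (fun h _ => ?_)
    by_cases hAf : Agr S f h
    · rw [hN.eq_zero (fun hAg => hA (hAf.trans hAg)), mul_zero]
    · rw [hM.eq_zero hAf, zero_mul]

lemma supp_commute {e : Fin d} {S T : Finset (Site L)} {M N} (hM : Supp e S M)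
    (hN : Supp e T N) (hd : Disjoint S T) : Commute M N := by
  classical
  show M * N = N * M
  ext f g
  simp only [Matrix.mul_apply]
  by_cases hA : ∀ z : Site L, z ∉ S → z ∉ T → f z = g z
  · set h₀ : GlobalIdx d L := fun z => if z ∈ S then g z else f z with hh₀
    set k₀ : GlobalIdx d L := fun z => if z ∈ T then g z else f z with hk₀
    have e1 : ∑ h, M f h * N h g = M f h₀ * N h₀ g := by
      refine Finset.sum_eq_single h₀ (fun h _ hne => ?_) (by simp)
      by_contra hz
      have h1 : Agr S f h := by
        by_contra hc; exact hz (by rw [hM.eq_zero hc, zero_mul])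
      have h2 : Agr T h g := by
        by_contra hc; exact hz (by rw [hN.eq_zero hc, mul_zero])
      apply hne
      funext z
      by_cases hzS : z ∈ S
      · have hzT : z ∉ T := Finset.disjoint_left.1 hd hzS
        simp [hh₀, hzS, h2 z hzT]
      · simp [hh₀, hzS, (h1 z hzS).symm]
    have e2 : ∑ h, N f h * M h g = N f k₀ * M k₀ g := by
      refine Finset.sum_eq_single k₀ (fun h _ hne => ?_) (by simp)
      by_contra hz
      have h1 : Agr T f h := by
        by_contra hc; exact hz (by rw [hN.eq_zero hc, zero_mul])
      have h2 : Agr S h g := by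
        by_contra hc; exact hz (by rw [hM.eq_zero hc, mul_zero])
      apply hne
      funext z
      by_cases hzT : z ∈ T
      · have hzS : z ∉ S := Finset.disjoint_right.1 hd hzT
        simp [hk₀, hzT, h2 z hzS]
      · simp [hk₀, hzT, (h1 z hzT).symm]
    rw [e1, e2]
    have hMfh : M f h₀ = M k₀ g := by
      have a1 : Agr S f h₀ := by
        intro z hz; simp [hh₀, hz]
      have a2 : Agr S k₀ g := by
        intro z hz
        by_cases hzT : z ∈ T
        · simp [hk₀, hzT]
        · simp [hk₀, hzT, hA z hz hzT]
      rw [hM.eq_patch a1, hM.eq_patch a2]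
      congr 1
      · funext z
        by_cases hz : z ∈ S
        · have hzT : z ∉ T := Finset.disjoint_left.1 hd hz
          simp [patch, hz, hk₀, hzT]
        · simp [patch, hz]
      · funext z
        by_cases hz : z ∈ S
        · simp [patch, hz, hh₀]
        · simp [patch, hz]
    have hNfh : N h₀ g = N f k₀ := by
      have a1 : Agr T h₀ g := by
        intro z hz
        by_cases hzS : z ∈ S
        · simp [hh₀, hzS]
        · simp [hh₀, hzS, hA z hzS hz]
      have a2 : Agr T f k₀ := by
        intro z hz; simp [hk₀, hz]
      rw [hN.eq_patch a1, hN.eq_patch a2]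
      congr 1
      · funext z
        by_cases hz : z ∈ T
        · have hzS : z ∉ S := Finset.disjoint_right.1 hd hz
          simp [patch, hz, hh₀, hzS]
        · simp [patch, hz]
      · funext z
        by_cases hz : z ∈ T
        · simp [patch, hz, hk₀]
        · simp [patch, hz]
    rw [hMfh, hNfh]; ring
  · push_neg at hA
    obtain ⟨z, hzS, hzT, hne⟩ := hA
    have z1 : ∀ h : GlobalIdx d L, M f h * N h g = 0 := by
      intro h
      by_cases hc : f z = h z
      · refine mul_eq_zero_of_right _ (hN.eq_zero (fun hAg => hne ?_))
        exact hc.trans (hAg z hzT)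
      · exact mul_eq_zero_of_left (hM.eq_zero (fun hAf => hc (hAf z hzS))) _
    have z2 : ∀ h : GlobalIdx d L, N f h * M h g = 0 := by
      intro h
      by_cases hc : f z = h z
      · refine mul_eq_zero_of_right _ (hM.eq_zero (fun hAg => hne ?_))
        exact hc.trans (hAg z hzS)
      · exact mul_eq_zero_of_left (hN.eq_zero (fun hAf => hc (hAf z hzT))) _
    rw [Finset.sum_eq_zero (fun h _ => z1 h), Finset.sum_eq_zero (fun h _ => z2 h)]

end SuppTheory
section PlaqAlgebra

variable {d L : ℕ} [NeZero L]

/-- The four sites of the plaquette anchored at `x`. -/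
def plaqF (x : Site L) : Finset (Site L) := {x, x + (1, 0), x + (0, 1), x + (1, 1)}

/-- The four legs of `f` at the plaquette anchored at `x`. -/
def legs (x : Site L) (f : GlobalIdx d L) : FourIdx d :=
  (f x, f (x + (1, 0)), f (x + (0, 1)), f (x + (1, 1)))

lemma not_mem_plaqF_iff {x z : Site L} :
    z ∉ plaqF x ↔ z ≠ x ∧ z ≠ x + (1, 0) ∧ z ≠ x + (0, 1) ∧ z ≠ x + (1, 1) := by
  simp only [plaqF, Finset.mem_insert, Finset.mem_singleton, not_or]

lemma plaqOp_apply (U : Matrix (FourIdx d) (FourIdx d) ℂ) (x : Site L)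
    (f g : GlobalIdx d L) :
    plaqOp U x f g = if Agr (plaqF x) f g then U (legs x f) (legs x g) else 0 := by
  have hiff : (∀ u : Site L, u ≠ x → u ≠ x + (1, 0) → u ≠ x + (0, 1) → u ≠ x + (1, 1) →
      f u = g u) ↔ Agr (plaqF x) f g := by
    constructor
    · intro h z hz
      rw [not_mem_plaqF_iff] at hz
      exact h z hz.1 hz.2.1 hz.2.2.1 hz.2.2.2
    · intro h z h1 h2 h3 h4
      exact h z (not_mem_plaqF_iff.2 ⟨h1, h2, h3, h4⟩)
  by_cases hA : Agr (plaqF x) f g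
  · rw [if_pos hA]
    show (if _ then _ else _) = _
    rw [if_pos (hiff.2 hA)]
    rfl
  · rw [if_neg hA]
    show (if _ then _ else _) = _
    rw [if_neg (fun h => hA (hiff.1 h))]

lemma legs_patch (e : Fin d) {S : Finset (Site L)} {x : Site L} (hS : plaqF x ⊆ S)
    (f : GlobalIdx d L) : legs x (patch e S f) = legs x f := by
  have h1 : x ∈ S := hS (by simp only [plaqF, Finset.mem_insert]; tauto)
  have h2 : x + (1, 0) ∈ S := hS (by simp only [plaqF, Finset.mem_insert]; tauto)
  have h3 : x + (0, 1) ∈ S := hS (by simp only [plaqF, Finset.mem_insert]; tauto)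
  have h4 : x + (1, 1) ∈ S := hS (by
    simp only [plaqF, Finset.mem_insert, Finset.mem_singleton]; tauto)
  simp only [legs, patch, if_pos h1, if_pos h2, if_pos h3, if_pos h4]

lemma supp_plaqOp (e : Fin d) (U : Matrix (FourIdx d) (FourIdx d) ℂ) (x : Site L) :
    Supp e (plaqF x) (plaqOp U x) := by
  intro f g
  constructor
  · intro hA
    rw [plaqOp_apply, plaqOp_apply, if_pos hA,
      if_pos (agr_patch_patch e (plaqF x) f g),
      legs_patch e (le_refl _) f, legs_patch e (le_refl _) g]
  · intro hA
    rw [plaqOp_apply, if_neg hA]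

lemma siteOpG_apply (a : Matrix (Fin d) (Fin d) ℂ) (y : Site L) (f g : GlobalIdx d L) :
    siteOpG a y f g = if Agr ({y} : Finset (Site L)) f g then a (f y) (g y) else 0 := by
  have hiff : (∀ u : Site L, u ≠ y → f u = g u) ↔ Agr ({y} : Finset (Site L)) f g := by
    constructor
    · intro h z hz
      exact h z (by simpa using hz)
    · intro h z hz
      exact h z (by simpa using hz)
  show (if ∀ u : Site L, u ≠ y → f u = g u then (1 : ℂ) else 0) * a (f y) (g y) = _
  by_cases hA : Agr ({y} : Finset (Site L)) f g
  · rw [if_pos hA, if_pos (hiff.2 hA), one_mul]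
  · rw [if_neg hA, if_neg (fun h => hA (hiff.1 h)), zero_mul]

lemma supp_siteOpG (e : Fin d) (a : Matrix (Fin d) (Fin d) ℂ) (y : Site L) :
    Supp e ({y} : Finset (Site L)) (siteOpG a y) := by
  intro f g
  have hy : y ∈ ({y} : Finset (Site L)) := Finset.mem_singleton_self y
  constructor
  · intro hA
    rw [siteOpG_apply, siteOpG_apply, if_pos hA, if_pos (agr_patch_patch e _ f g)]
    simp only [patch, if_pos hy]
  · intro hA
    rw [siteOpG_apply, if_neg hA]

lemma add_one_ne (hL2 : 2 ≤ L) (a : ZMod L) : a + 1 ≠ a := by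
  haveI : Fact (1 < L) := ⟨by omega⟩
  intro h
  have h1 : (1 : ZMod L) = 0 := by
    have := congrArg (· - a) h
    simpa using this
  have h2 := congrArg ZMod.val h1
  rw [ZMod.val_one, ZMod.val_zero] at h2
  exact one_ne_zero h2

lemma pd1 (hL2 : 2 ≤ L) (x : Site L) : x + (1, 0) ≠ x := fun h =>
  add_one_ne hL2 x.1 (by simpa using congrArg Prod.fst h)

lemma pd2 (hL2 : 2 ≤ L) (x : Site L) : x + (0, 1) ≠ x := fun h =>
  add_one_ne hL2 x.2 (by simpa using congrArg Prod.snd h)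

lemma pd3 (hL2 : 2 ≤ L) (x : Site L) : x + (1, 1) ≠ x := fun h =>
  add_one_ne hL2 x.1 (by simpa using congrArg Prod.fst h)

lemma pd4 (hL2 : 2 ≤ L) (x : Site L) : x + (0, 1) ≠ x + (1, 0) := fun h =>
  add_one_ne hL2 x.1 (by simpa using (congrArg Prod.fst h).symm)

lemma pd5 (hL2 : 2 ≤ L) (x : Site L) : x + (1, 1) ≠ x + (1, 0) := fun h =>
  add_one_ne hL2 x.2 (by simpa using congrArg Prod.snd h)

lemma pd6 (hL2 : 2 ≤ L) (x : Site L) : x + (1, 1) ≠ x + (0, 1) := fun h =>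
  add_one_ne hL2 x.1 (by simpa using congrArg Prod.fst h)

/-- update the four legs of `f` at the plaquette `x` to `q` -/
def updL (x : Site L) (f : GlobalIdx d L) (q : FourIdx d) : GlobalIdx d L :=
  fun z =>
    if z = x then q.1 else if z = x + (1, 0) then q.2.1
    else if z = x + (0, 1) then q.2.2.1 else if z = x + (1, 1) then q.2.2.2 else f z

lemma updL_agr (x : Site L) (f : GlobalIdx d L) (q : FourIdx d) :
    Agr (plaqF x) f (updL x f q) := by
  intro z hz
  rw [not_mem_plaqF_iff] at hz
  simp only [updL]
  rw [if_neg hz.1, if_neg hz.2.1, if_neg hz.2.2.1, if_neg hz.2.2.2]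

lemma legs_updL (hL2 : 2 ≤ L) (x : Site L) (f : GlobalIdx d L) (q : FourIdx d) :
    legs x (updL x f q) = q := by
  have c1 : updL x f q x = q.1 := by
    simp [updL]
  have c2 : updL x f q (x + (1, 0)) = q.2.1 := by
    simp [updL, pd1 hL2 x]
  have c3 : updL x f q (x + (0, 1)) = q.2.2.1 := by
    simp [updL, pd2 hL2 x, pd4 hL2 x]
  have hone : (1 : ZMod L) ≠ 0 := by
    haveI : Fact (1 < L) := ⟨by omega⟩
    exact one_ne_zero
  have c4 : updL x f q (x + (1, 1)) = q.2.2.2 := by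
    simp [updL, pd3 hL2 x, pd5 hL2 x, pd6 hL2 x, Prod.ext_iff, hone]
  show (_, _, _, _) = q
  rw [c1, c2, c3, c4]

lemma updL_legs (x : Site L) {f h : GlobalIdx d L} (hA : Agr (plaqF x) f h) :
    updL x f (legs x h) = h := by
  funext z
  simp only [updL]
  by_cases h1 : z = x
  · rw [if_pos h1, h1]; rfl
  rw [if_neg h1]
  by_cases h2 : z = x + (1, 0)
  · rw [if_pos h2, h2]; rfl
  rw [if_neg h2]
  by_cases h3 : z = x + (0, 1)
  · rw [if_pos h3, h3]; rfl
  rw [if_neg h3]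
  by_cases h4 : z = x + (1, 1)
  · rw [if_pos h4, h4]; rfl
  rw [if_neg h4]
  exact hA z (not_mem_plaqF_iff.2 ⟨h1, h2, h3, h4⟩)

lemma plaqOp_mul (hL2 : 2 ≤ L) (U V : Matrix (FourIdx d) (FourIdx d) ℂ) (x : Site L) :
    plaqOp U x * plaqOp V x = plaqOp (U * V) x := by
  classical
  ext f g
  rw [Matrix.mul_apply, plaqOp_apply (U * V)]
  by_cases hA : Agr (plaqF x) f g
  · rw [if_pos hA, Matrix.mul_apply]
    have hstep : ∀ h, h ∈ (Finset.univ : Finset (GlobalIdx d L)) →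
        plaqOp U x f h * plaqOp V x h g ≠ 0 → Agr (plaqF x) f h := by
      intro h _ hne
      by_contra hc
      rw [plaqOp_apply, if_neg hc, zero_mul] at hne
      exact hne rfl
    rw [← Finset.sum_filter_of_ne hstep]
    refine Finset.sum_nbij' (fun h => legs x h) (fun q => updL x f q) ?_ ?_ ?_ ?_ ?_
    · intro h _; exact Finset.mem_univ _
    · intro q _
      simp only [Finset.mem_filter, Finset.mem_univ, true_and]
      exact updL_agr x f q
    · intro h hh
      simp only [Finset.mem_filter, Finset.mem_univ, true_and] at hh
      exact updL_legs x hh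
    · intro q _; exact legs_updL hL2 x f q
    · intro h hh
      simp only [Finset.mem_filter, Finset.mem_univ, true_and] at hh
      have hAh : Agr (plaqF x) h g := hh.symm.trans hA
      rw [plaqOp_apply, plaqOp_apply, if_pos hh, if_pos hAh]
  · rw [if_neg hA]
    refine Finset.sum_eq_zero (fun h _ => ?_)
    by_cases hAf : Agr (plaqF x) f h
    · rw [plaqOp_apply V, if_neg (fun hAg => hA (hAf.trans hAg)), mul_zero]
    · rw [plaqOp_apply U, if_neg hAf, zero_mul]

lemma plaqOp_conjT (U : Matrix (FourIdx d) (FourIdx d) ℂ) (x : Site L) :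
    (plaqOp U x)ᴴ = plaqOp Uᴴ x := by
  ext f g
  rw [Matrix.conjTranspose_apply, plaqOp_apply, plaqOp_apply]
  by_cases hA : Agr (plaqF x) f g
  · rw [if_pos hA.symm, if_pos hA, Matrix.conjTranspose_apply]
  · rw [if_neg (fun h => hA (Agr.symm h)), if_neg hA, star_zero]

lemma plaqOp_one (x : Site L) :
    plaqOp (1 : Matrix (FourIdx d) (FourIdx d) ℂ) x = 1 := by
  ext f g
  rw [plaqOp_apply, Matrix.one_apply]
  by_cases hA : Agr (plaqF x) f g
  · rw [if_pos hA, Matrix.one_apply]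
    by_cases hfg : f = g
    · subst hfg; simp
    · rw [if_neg hfg, if_neg]
      intro hlegs
      apply hfg
      funext z
      by_cases hz : z ∈ plaqF x
      · simp only [plaqF, Finset.mem_insert, Finset.mem_singleton] at hz
        have h1 := congrArg (fun q : FourIdx d => q.1) hlegs
        have h2 := congrArg (fun q : FourIdx d => q.2.1) hlegs
        have h3 := congrArg (fun q : FourIdx d => q.2.2.1) hlegs
        have h4 := congrArg (fun q : FourIdx d => q.2.2.2) hlegs
        simp only [legs] at h1 h2 h3 h4
        rcases hz with rfl | rfl | rfl | rfl <;> assumption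
      · exact hA z hz
  · rw [if_neg hA, Matrix.one_apply, if_neg]
    intro hfg
    exact hA (by subst hfg; exact fun z _ => rfl)

lemma isUnitary_one {n : Type*} [Fintype n] [DecidableEq n] :
    IsUnitary (1 : Matrix n n ℂ) := by
  constructor <;> simp [IsUnitary]

lemma IsUnitary.mul {n : Type*} [Fintype n] [DecidableEq n] {A B : Matrix n n ℂ}
    (hA : IsUnitary A) (hB : IsUnitary B) : IsUnitary (A * B) := by
  constructor
  · rw [Matrix.conjTranspose_mul]
    calc A * B * (Bᴴ * Aᴴ) = A * (B * Bᴴ) * Aᴴ := by noncomm_ring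
    _ = 1 := by rw [hB.1, mul_one, hA.1]
  · rw [Matrix.conjTranspose_mul]
    calc Bᴴ * Aᴴ * (A * B) = Bᴴ * (Aᴴ * A) * B := by noncomm_ring
    _ = 1 := by rw [hA.2, mul_one, hB.2]

lemma isUnitary_listProd {n : Type*} [Fintype n] [DecidableEq n] (l : List (Matrix n n ℂ))
    (h : ∀ A ∈ l, IsUnitary A) : IsUnitary l.prod := by
  induction l with
  | nil => simpa using isUnitary_one
  | cons A l ih =>
    rw [List.prod_cons]
    exact (h A (List.mem_cons_self)).mul (ih (fun B hB => h B (List.mem_cons_of_mem A hB)))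

lemma isUnitary_plaqOp (hL2 : 2 ≤ L) {U : Matrix (FourIdx d) (FourIdx d) ℂ}
    (hU : IsUnitary U) (x : Site L) : IsUnitary (plaqOp U x) := by
  constructor
  · rw [plaqOp_conjT, plaqOp_mul hL2, hU.1, plaqOp_one]
  · rw [plaqOp_conjT, plaqOp_mul hL2, hU.2, plaqOp_one]

end PlaqAlgebra
section Geometry

variable {L : ℕ} [NeZero L]

lemma cdist_key (a b c : ZMod L) : cdist a c ≤ (a - b).val + (b - c).val := by
  have h1 : a - c = (((a - b).val + (b - c).val : ℕ) : ZMod L) := by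
    push_cast [ZMod.natCast_zmod_val]
    ring
  calc cdist a c ≤ (a - c).val := min_le_left _ _
    _ ≤ _ := by rw [h1, ZMod.val_natCast]; exact Nat.mod_le _ _

lemma cdist_key2 (a b c : ZMod L) : cdist a c ≤ (a - b).val + (c - b).val := by
  rcases le_total ((c - b).val) ((a - b).val) with hc | hc
  · have h1 : a - c = (((a - b).val - (c - b).val : ℕ) : ZMod L) := by
      push_cast [Nat.cast_sub hc, ZMod.natCast_zmod_val]
      ring
    calc cdist a c ≤ (a - c).val := min_le_left _ _
      _ ≤ (a - b).val - (c - b).val := by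
          rw [h1, ZMod.val_natCast]; exact le_trans (Nat.mod_le _ _) (le_refl _)
      _ ≤ _ := by omega
  · have h1 : c - a = (((c - b).val - (a - b).val : ℕ) : ZMod L) := by
      push_cast [Nat.cast_sub hc, ZMod.natCast_zmod_val]
      ring
    calc cdist a c ≤ (c - a).val := min_le_right _ _
      _ ≤ (c - b).val - (a - b).val := by
          rw [h1, ZMod.val_natCast]; exact le_trans (Nat.mod_le _ _) (le_refl _)
      _ ≤ _ := by omega

lemma cdist_key3 (a b c : ZMod L) : cdist a c ≤ (b - a).val + (b - c).val := by
  rcases le_total ((b - c).val) ((b - a).val) with hc | hc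
  · have h1 : c - a = (((b - a).val - (b - c).val : ℕ) : ZMod L) := by
      push_cast [Nat.cast_sub hc, ZMod.natCast_zmod_val]
      ring
    calc cdist a c ≤ (c - a).val := min_le_right _ _
      _ ≤ (b - a).val - (b - c).val := by
          rw [h1, ZMod.val_natCast]; exact Nat.mod_le _ _
      _ ≤ _ := by omega
  · have h1 : a - c = (((b - c).val - (b - a).val : ℕ) : ZMod L) := by
      push_cast [Nat.cast_sub hc, ZMod.natCast_zmod_val]
      ring
    calc cdist a c ≤ (a - c).val := min_le_left _ _
      _ ≤ (b - c).val - (b - a).val := by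
          rw [h1, ZMod.val_natCast]; exact Nat.mod_le _ _
      _ ≤ _ := by omega

lemma cdist_comm (a b : ZMod L) : cdist a b = cdist b a := min_comm _ _

lemma cdist_triangle (a b c : ZMod L) : cdist a c ≤ cdist a b + cdist b c := by
  have h11 := cdist_key a b c
  have h22 := cdist_key c b a
  rw [cdist_comm c a] at h22
  have h12 := cdist_key2 a b c
  have h21 := cdist_key3 a b c
  unfold cdist at *
  omega

lemma cdist_self (a : ZMod L) : cdist a a = 0 := by simp [cdist]

lemma torusDist_self (u : Site L) : torusDist u u = 0 := by
  simp [torusDist, cdist_self]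

lemma torusDist_triangle (u v w : Site L) :
    torusDist u w ≤ torusDist u v + torusDist v w := by
  have h1 := cdist_triangle u.1 v.1 w.1
  have h2 := cdist_triangle u.2 v.2 w.2
  unfold torusDist
  omega

lemma cdist_add_one (hL2 : 2 ≤ L) (a : ZMod L) : cdist a (a + 1) ≤ 1 := by
  haveI : Fact (1 < L) := ⟨by omega⟩
  calc cdist a (a + 1) ≤ (a + 1 - a).val := min_le_right _ _
    _ ≤ 1 := by rw [show a + 1 - a = 1 by ring, ZMod.val_one]

lemma cdist_cases (hL2 : 2 ≤ L) (b : ZMod L) {a a' : ZMod L}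
    (ha : a = b ∨ a = b + 1) (ha' : a' = b ∨ a' = b + 1) : cdist a a' ≤ 1 := by
  rcases ha with rfl | rfl <;> rcases ha' with rfl | rfl
  · simp [cdist_self]
  · exact cdist_add_one hL2 _
  · rw [cdist_comm]; exact cdist_add_one hL2 _
  · simp [cdist_self]

lemma plaqF_coords {x z : Site L} (h : z ∈ plaqF x) :
    (z.1 = x.1 ∨ z.1 = x.1 + 1) ∧ (z.2 = x.2 ∨ z.2 = x.2 + 1) := by
  simp only [plaqF, Finset.mem_insert, Finset.mem_singleton] at h
  rcases h with rfl | rfl | rfl | rfl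
  · exact ⟨Or.inl rfl, Or.inl rfl⟩
  · exact ⟨Or.inr (by simp), Or.inl (by simp)⟩
  · exact ⟨Or.inl (by simp), Or.inr (by simp)⟩
  · exact ⟨Or.inr (by simp), Or.inr (by simp)⟩

lemma plaq_diam (hL2 : 2 ≤ L) (x : Site L) {z z' : Site L} (hz : z ∈ plaqF x)
    (hz' : z' ∈ plaqF x) : torusDist z z' ≤ 1 := by
  obtain ⟨h1, h2⟩ := plaqF_coords hz
  obtain ⟨h1', h2'⟩ := plaqF_coords hz'
  have c1 := cdist_cases hL2 x.1 h1 h1'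
  have c2 := cdist_cases hL2 x.2 h2 h2'
  unfold torusDist
  omega

/-- ball of radius `j` around the plaquette of `msite y` -/
def sball (y : Site L) (j : ℕ) : Finset (Site L) :=
  Finset.univ.filter fun z => ∃ w ∈ plaqF (msite y), torusDist w z ≤ j

lemma LCfin_eq_sball (y : Site L) (t : ℕ) : LCfin y t = sball y (2 * t - 1) := rfl

lemma sball_mono (y : Site L) {j j' : ℕ} (h : j ≤ j') : sball y j ⊆ sball y j' := by
  intro z hz
  simp only [sball, Finset.mem_filter, Finset.mem_univ, true_and] at hz ⊢
  obtain ⟨w, hw, hd⟩ := hz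
  exact ⟨w, hw, le_trans hd h⟩

lemma plaq_expand (hL2 : 2 ≤ L) (x y : Site L) (j : ℕ)
    (h : ¬ Disjoint (plaqF x) (sball y j)) : plaqF x ⊆ sball y (j + 1) := by
  rw [Finset.not_disjoint_iff] at h
  obtain ⟨z, hzP, hzS⟩ := h
  intro z' hz'
  simp only [sball, Finset.mem_filter, Finset.mem_univ, true_and] at hzS ⊢
  obtain ⟨w, hw, hd⟩ := hzS
  refine ⟨w, hw, ?_⟩
  have ht := torusDist_triangle w z z'
  have hdd := plaq_diam hL2 x hzP hz'
  omega

lemma plaqF_msite_sub_sball (y : Site L) (j : ℕ) : plaqF (msite y) ⊆ sball y j := by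
  intro z hz
  simp only [sball, Finset.mem_filter, Finset.mem_univ, true_and]
  exact ⟨z, hz, by rw [torusDist_self]; omega⟩

lemma mem_plaqF_msite (y : Site L) : y ∈ plaqF (msite y) := by
  obtain ⟨y1, y2⟩ := y
  simp only [plaqF, Finset.mem_insert, Finset.mem_singleton, msite, Prod.mk_add_mk,
    Prod.mk.injEq]
  by_cases h1 : Odd y1.val <;> by_cases h2 : Odd y2.val <;>
    simp [h1, h2, sub_add_cancel]

/-- nat-cast equality with both sides at most `L` -/
lemma cast_eq_cases {m n : ℕ} (hm : m ≤ L) (hn : n ≤ L)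
    (h : ((m : ℕ) : ZMod L) = ((n : ℕ) : ZMod L)) :
    m = n ∨ (m = L ∧ n = 0) ∨ (m = 0 ∧ n = L) := by
  rw [ZMod.natCast_eq_natCast_iff'] at h
  rcases lt_or_eq_of_le hm with hm' | rfl
  · rw [Nat.mod_eq_of_lt hm'] at h
    rcases lt_or_eq_of_le hn with hn' | rfl
    · rw [Nat.mod_eq_of_lt hn'] at h
      exact Or.inl h
    · rw [Nat.mod_self] at h
      exact Or.inr (Or.inr ⟨h, rfl⟩)
  · rw [Nat.mod_self] at h
    rcases lt_or_eq_of_le hn with hn' | rfl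
    · rw [Nat.mod_eq_of_lt hn'] at h
      exact Or.inr (Or.inl ⟨rfl, h.symm⟩)
    · exact Or.inl rfl

lemma coord_unify (hLe : Even L) {c i ε i' ε' : ℕ} (hc : c ≤ 1) (hε : ε ≤ 1)
    (hε' : ε' ≤ 1) (hi : i < L / 2) (hi' : i' < L / 2)
    (h : ((2 * i + c + ε : ℕ) : ZMod L) = ((2 * i' + c + ε' : ℕ) : ZMod L)) :
    i = i' ∧ ε = ε' := by
  obtain ⟨hl, hLeq⟩ := hLe
  have hLeq' : L = 2 * hl := by omega
  have hm : 2 * i + c + ε ≤ L := by omega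
  have hn : 2 * i' + c + ε' ≤ L := by omega
  rcases cast_eq_cases hm hn h with h1 | ⟨h1, h2⟩ | ⟨h1, h2⟩ <;> omega

lemma coord_to_eps {n : ℕ} {a : ZMod L} (h : a = ((n : ℕ) : ZMod L) ∨ a = ((n : ℕ) : ZMod L) + 1) :
    ∃ ε ≤ 1, a = ((n + ε : ℕ) : ZMod L) := by
  rcases h with rfl | rfl
  · exact ⟨0, by omega, by push_cast; ring⟩
  · exact ⟨1, le_refl _, by push_cast; ring⟩

lemma anchors_plaq_disjoint (hLe : Even L) {c : ℕ} (hc : c ≤ 1) {i j i' j' : ℕ}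
    (hi : i < L / 2) (hj : j < L / 2) (hi' : i' < L / 2) (hj' : j' < L / 2)
    (hne : (i, j) ≠ (i', j')) :
    Disjoint (plaqF ((((2 * i + c : ℕ) : ZMod L), ((2 * j + c : ℕ) : ZMod L)) : Site L))
      (plaqF ((((2 * i' + c : ℕ) : ZMod L), ((2 * j' + c : ℕ) : ZMod L)) : Site L)) := by
  rw [Finset.disjoint_left]
  intro z hz hz'
  obtain ⟨h1, h2⟩ := plaqF_coords hz
  obtain ⟨h1', h2'⟩ := plaqF_coords hz'
  obtain ⟨ε1, hε1, he1⟩ := coord_to_eps h1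
  obtain ⟨ε2, hε2, he2⟩ := coord_to_eps h2
  obtain ⟨ε1', hε1', he1'⟩ := coord_to_eps h1'
  obtain ⟨ε2', hε2', he2'⟩ := coord_to_eps h2'
  have hii := coord_unify hLe hc hε1 hε1' hi hi' (he1.symm.trans he1')
  have hjj := coord_unify hLe hc hε2 hε2' hj hj' (he2.symm.trans he2')
  exact hne (by rw [Prod.mk.injEq]; exact ⟨hii.1, hjj.1⟩)

lemma msite_coord_odd {n : ℕ} (hn : 2 * n + 1 < L) {a : ZMod L}
    (hc : a = ((2 * n + 1 : ℕ) : ZMod L) ∨ a = ((2 * n + 1 : ℕ) : ZMod L) + 1) :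
    (if Odd a.val then a else a - 1) = ((2 * n + 1 : ℕ) : ZMod L) := by
  rcases hc with rfl | rfl
  · rw [if_pos]
    rw [ZMod.val_natCast, Nat.mod_eq_of_lt hn]
    exact ⟨n, by omega⟩
  · rw [if_neg, add_sub_cancel_right]
    have hcast : ((2 * n + 1 : ℕ) : ZMod L) + 1 = ((2 * n + 2 : ℕ) : ZMod L) := by
      push_cast; ring
    rw [hcast, ZMod.val_natCast]
    have hle : 2 * n + 2 ≤ L := by omega
    rcases lt_or_eq_of_le hle with h' | h'
    · rw [Nat.mod_eq_of_lt h']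
      rintro ⟨k, hk⟩; omega
    · rw [h', Nat.mod_self]
      rintro ⟨k, hk⟩; omega

lemma odd_anchor_eq_msite (hLe : Even L) {i j : ℕ} (hi : i < L / 2) (hj : j < L / 2)
    {y : Site L}
    (hy : y ∈ plaqF ((((2 * i + 1 : ℕ) : ZMod L), ((2 * j + 1 : ℕ) : ZMod L)) : Site L)) :
    ((((2 * i + 1 : ℕ) : ZMod L), ((2 * j + 1 : ℕ) : ZMod L)) : Site L) = msite y := by
  obtain ⟨hl, hLeq⟩ := hLe
  have hLeq' : L = 2 * hl := by omega
  obtain ⟨h1, h2⟩ := plaqF_coords hy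
  have hb1 : 2 * i + 1 < L := by omega
  have hb2 : 2 * j + 1 < L := by omega
  unfold msite
  rw [Prod.mk.injEq]
  exact ⟨(msite_coord_odd hb1 h1).symm, (msite_coord_odd hb2 h2).symm⟩

end Geometry
section Layers

variable {d L : ℕ} [NeZero L]

lemma pairwise_flatMap {α β : Type*} {R : β → β → Prop} {l : List α} {f : α → List β}
    (h1 : ∀ a ∈ l, (f a).Pairwise R)
    (h2 : l.Pairwise fun a a' => ∀ b ∈ f a, ∀ b' ∈ f a', R b b') :
    (l.flatMap f).Pairwise R := by
  induction l with
  | nil => simp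
  | cons a l ih =>
    rw [List.flatMap_cons, List.pairwise_append]
    refine ⟨h1 a (List.mem_cons_self),
      ih (fun a' ha' => h1 a' (List.mem_cons_of_mem _ ha')) (List.pairwise_cons.1 h2).2, ?_⟩
    intro b hb b' hb'
    rw [List.mem_flatMap] at hb'
    obtain ⟨a', ha', hb'⟩ := hb'
    exact (List.pairwise_cons.1 h2).1 a' ha' b hb b' hb'

/-- the list of anchors of a layer with offset `c` -/
def anchors (L c : ℕ) [NeZero L] : List (Site L) :=
  (List.range (L / 2)).flatMap fun i => (List.range (L / 2)).map fun j =>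
    (((2 * i + c : ℕ) : ZMod L), ((2 * j + c : ℕ) : ZMod L))

lemma mem_anchors {c : ℕ} {x : Site L} (h : x ∈ anchors L c) :
    ∃ i < L / 2, ∃ j < L / 2,
      x = (((2 * i + c : ℕ) : ZMod L), ((2 * j + c : ℕ) : ZMod L)) := by
  simp only [anchors, List.mem_flatMap, List.mem_map, List.mem_range] at h
  obtain ⟨i, hi, j, hj, hx⟩ := h
  exact ⟨i, hi, j, hj, hx.symm⟩

lemma anchors_pairwise (hLe : Even L) {c : ℕ} (hc : c ≤ 1) :
    (anchors L c).Pairwise fun x x' => Disjoint (plaqF x) (plaqF x') := by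
  apply pairwise_flatMap
  · intro i hi
    rw [List.mem_range] at hi
    rw [List.pairwise_map]
    refine List.pairwise_lt_range.imp_of_mem ?_
    intro j j' hj hj' hlt
    rw [List.mem_range] at hj hj'
    exact anchors_plaq_disjoint hLe hc hi hj hi hj' (by simp; omega)
  · refine List.pairwise_lt_range.imp_of_mem ?_
    intro i i' hi hi' hlt
    rw [List.mem_range] at hi hi'
    intro b hb b' hb'
    rw [List.mem_map] at hb hb'
    obtain ⟨j, hj, rfl⟩ := hb
    obtain ⟨j', hj', rfl⟩ := hb'
    rw [List.mem_range] at hj hj'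
    exact anchors_plaq_disjoint hLe hc hi hj hi' hj' (by simp; omega)

lemma Uoo_eq (U : Matrix (FourIdx d) (FourIdx d) ℂ) :
    Uoo d L U = ((anchors L 1).map (plaqOp U)).prod := by
  unfold Uoo anchors
  rw [List.map_flatMap]
  simp [List.map_map, Function.comp_def]

lemma Uee_eq (U : Matrix (FourIdx d) (FourIdx d) ℂ) :
    Uee d L U = ((anchors L 0).map (plaqOp U)).prod := by
  unfold Uee anchors
  rw [List.map_flatMap]
  simp [List.map_map, Function.comp_def]

lemma supp_listProd {e : Fin d} {S : Finset (Site L)}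
    (l : List (Matrix (GlobalIdx d L) (GlobalIdx d L) ℂ)) (h : ∀ A ∈ l, Supp e S A) :
    Supp e S l.prod := by
  induction l with
  | nil => simpa using supp_one e S
  | cons A l ih =>
    rw [List.prod_cons]
    exact supp_mul (h A (List.mem_cons_self))
      (ih (fun B hB => h B (List.mem_cons_of_mem A hB)))

lemma layer_conj (e : Fin d) (hL2 : 2 ≤ L) {U : Matrix (FourIdx d) (FourIdx d) ℂ}
    (hU : IsUnitary U) (xs : List (Site L))
    (hpair : xs.Pairwise fun x x' => Disjoint (plaqF x) (plaqF x'))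
    {S S' : Finset (Site L)} (hSS' : S ⊆ S')
    (hexp : ∀ x ∈ xs, ¬ Disjoint (plaqF x) S → plaqF x ⊆ S')
    {M : Matrix (GlobalIdx d L) (GlobalIdx d L) ℂ} (hM : Supp e S M) :
    Supp e S' ((xs.map (plaqOp U)).prodᴴ * M * (xs.map (plaqOp U)).prod) := by
  classical
  set p : Site L → Bool := fun x => decide (Disjoint (plaqF x) S) with hp
  have hperm : List.Perm (xs.filter p ++ xs.filter fun x => !p x) xs :=
    List.filter_append_perm p xs
  have hcomm : (xs.map (plaqOp U)).Pairwise Commute := by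
    rw [List.pairwise_map]
    exact hpair.imp fun h => supp_commute (supp_plaqOp e U _) (supp_plaqOp e U _) h
  have hperm' : List.Perm ((xs.filter p ++ xs.filter fun x => !p x).map (plaqOp U))
      (xs.map (plaqOp U)) := hperm.map _
  have hcomm' : ((xs.filter p ++ xs.filter fun x => !p x).map (plaqOp U)).Pairwise Commute :=
    (hperm'.pairwise_iff fun h => h.symm).2 hcomm
  have hprod : (xs.map (plaqOp U)).prod
      = ((xs.filter p).map (plaqOp U)).prod * ((xs.filter fun x => !p x).map (plaqOp U)).prod := by
    rw [← List.prod_append, ← List.map_append]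
    exact (hperm'.prod_eq' hcomm').symm
  set B := ((xs.filter p).map (plaqOp U)).prod with hB
  set A := ((xs.filter fun x => !p x).map (plaqOp U)).prod with hA
  have hBu : IsUnitary B := by
    refine isUnitary_listProd _ ?_
    intro X hX
    rw [List.mem_map] at hX
    obtain ⟨x, _, rfl⟩ := hX
    exact isUnitary_plaqOp hL2 hU x
  have hBM : Commute M B := by
    refine Commute.list_prod_right _ _ ?_
    intro X hX
    rw [List.mem_map] at hX
    obtain ⟨x, hx, rfl⟩ := hX
    rw [List.mem_filter] at hx
    have hdisj : Disjoint (plaqF x) S := of_decide_eq_true hx.2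
    exact supp_commute hM (supp_plaqOp e U x) hdisj.symm
  have hAsupp : Supp e S' A := by
    refine supp_listProd _ ?_
    intro X hX
    rw [List.mem_map] at hX
    obtain ⟨x, hx, rfl⟩ := hX
    rw [List.mem_filter] at hx
    have hndisj : ¬ Disjoint (plaqF x) S := by
      have h2 := hx.2
      simp only [hp, Bool.not_eq_true', decide_eq_false_iff_not] at h2
      exact h2
    exact supp_mono (hexp x hx.1 hndisj) (supp_plaqOp e U x)
  have key : (xs.map (plaqOp U)).prodᴴ * M * (xs.map (plaqOp U)).prod = Aᴴ * M * A := by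
    rw [hprod, Matrix.conjTranspose_mul]
    have h1 : Bᴴ * M * B = M := by
      rw [mul_assoc, hBM.eq, ← mul_assoc, hBu.2, one_mul]
    calc Aᴴ * Bᴴ * M * (B * A) = Aᴴ * (Bᴴ * M * B) * A := by noncomm_ring
      _ = Aᴴ * M * A := by rw [h1]
  rw [key]
  exact supp_mul (supp_mul (supp_conjT hAsupp) (supp_mono hSS' hM)) hAsupp

end Layers

/-- The Heisenberg-evolved local operator `𝕌^{−t} a_y 𝕌^t` is supported on the
light-cone base `LC`. -/
theorem heisenberg_lightcone_support (d L t : ℕ) [NeZero L]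
    (hd : 1 ≤ d) (hL : Even L) (hL2 : 2 ≤ L) (ht : 1 ≤ t)
    (U : Matrix (FourIdx d) (FourIdx d) ℂ) (hU : IsUnitary U)
    (a : Matrix (Fin d) (Fin d) ℂ) (y : Site L) :
    ∃ b : Matrix ({z // z ∈ LCfin y t} → Fin d) ({z // z ∈ LCfin y t} → Fin d) ℂ,
      ∀ f g : GlobalIdx d L,
        ((Ustep d L U)ᴴ ^ t * siteOpG a y * (Ustep d L U) ^ t) f g =
          if ∀ z : Site L, z ∉ LCfin y t → f z = g z
          then b (fun w => f w.1) (fun w => g w.1) else 0 := by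
  set e : Fin d := ⟨0, hd⟩ with he
  set W := Ustep d L U with hW
  set M0 := siteOpG a y with hM0
  have hconj : ∀ (M : Matrix (GlobalIdx d L) (GlobalIdx d L) ℂ) (S S1 S2 : Finset (Site L)),
      Supp e S M → S ⊆ S1 → (∀ x ∈ anchors L 1, ¬Disjoint (plaqF x) S → plaqF x ⊆ S1) →
      S1 ⊆ S2 → (∀ x ∈ anchors L 0, ¬Disjoint (plaqF x) S1 → plaqF x ⊆ S2) →
      Supp e S2 (Wᴴ * M * W) := by
    intro M S S1 S2 hM h1 h2 h3 h4
    have hmid := layer_conj e hL2 hU (anchors L 1) (anchors_pairwise hL (by omega)) h1 h2 hM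
    have hout := layer_conj e hL2 hU (anchors L 0) (anchors_pairwise hL (by omega)) h3 h4 hmid
    have heq : Wᴴ * M * W
        = ((anchors L 0).map (plaqOp U)).prodᴴ *
            (((anchors L 1).map (plaqOp U)).prodᴴ * M * ((anchors L 1).map (plaqOp U)).prod) *
          ((anchors L 0).map (plaqOp U)).prod := by
      rw [hW]
      unfold Ustep
      rw [← Uoo_eq, ← Uee_eq, Matrix.conjTranspose_mul]
      noncomm_ring
    rw [heq]
    exact hout
  have main : ∀ k : ℕ, Supp e (sball y (2 * (k + 1) - 1)) (Wᴴ ^ (k + 1) * M0 * W ^ (k + 1)) := by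
    intro k
    induction k with
    | zero =>
      have h2 : ∀ x ∈ anchors L 1, ¬Disjoint (plaqF x) ({y} : Finset (Site L)) →
          plaqF x ⊆ sball y 0 := by
        intro x hx hdisj
        obtain ⟨i, hi, j, hj, rfl⟩ := mem_anchors hx
        rw [Finset.not_disjoint_iff] at hdisj
        obtain ⟨z, hz1, hz2⟩ := hdisj
        rw [Finset.mem_singleton] at hz2
        rw [hz2] at hz1
        rw [odd_anchor_eq_msite hL hi hj hz1]
        exact plaqF_msite_sub_sball y 0
      have h := hconj M0 {y} (sball y 0) (sball y 1) (supp_siteOpG e a y)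
        (Finset.singleton_subset_iff.2 (plaqF_msite_sub_sball y 0 (mem_plaqF_msite y)))
        h2 (sball_mono y (by omega)) (fun x _ hx => plaq_expand hL2 x y 0 hx)
      have hnum : 2 * (0 + 1) - 1 = 1 := by omega
      rw [hnum, pow_one, pow_one]
      exact h
    | succ k ih =>
      have heq : Wᴴ ^ (k + 1 + 1) * M0 * W ^ (k + 1 + 1)
          = Wᴴ * (Wᴴ ^ (k + 1) * M0 * W ^ (k + 1)) * W := by
        rw [pow_succ W (k + 1), pow_succ' (Wᴴ) (k + 1)]
        simp only [mul_assoc]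
      rw [heq]
      have h := hconj _ (sball y (2 * (k + 1) - 1)) (sball y (2 * (k + 1) - 1 + 1))
        (sball y (2 * (k + 1) - 1 + 1 + 1)) ih (sball_mono y (by omega))
        (fun x _ hx => plaq_expand hL2 x y _ hx) (sball_mono y (by omega))
        (fun x _ hx => plaq_expand hL2 x y _ hx)
      have hnum : 2 * (k + 1) - 1 + 1 + 1 = 2 * (k + 1 + 1) - 1 := by omega
      rw [hnum] at h
      exact h
  obtain ⟨k, rfl⟩ : ∃ k, t = k + 1 := ⟨t - 1, by omega⟩
  have final := main k
  rw [LCfin_eq_sball]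
  have hnum2 : 2 * (k + 1) - 1 = 2 * (k + 1) - 1 := rfl
  set S := sball y (2 * (k + 1) - 1) with hS
  set ext : ({z // z ∈ S} → Fin d) → GlobalIdx d L :=
    fun f₀ z => if h : z ∈ S then f₀ ⟨z, h⟩ else e with hext
  have hpe : ∀ f : GlobalIdx d L, ext (fun w => f w.1) = patch e S f := by
    intro f
    funext z
    rw [hext]
    by_cases hz : z ∈ S <;> simp [patch, hz]
  refine ⟨Matrix.of fun f₀ g₀ => (Wᴴ ^ (k + 1) * M0 * W ^ (k + 1)) (ext f₀) (ext g₀), ?_⟩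
  intro f g
  by_cases hA : Agr S f g
  · rw [if_pos (show ∀ z : Site L, z ∉ S → f z = g z from hA), Matrix.of_apply, hpe f, hpe g]
    exact final.eq_patch hA
  · rw [if_neg (show ¬ ∀ z : Site L, z ∉ S → f z = g z from hA)]
    exact final.eq_zero hA
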